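/- Let α > 0 and β ∈ ℂ with β ≠ 0, and let 𝔛, Λ, ΛH, K_𝔛, K^{≥0}_𝔛 and π^H be as in the ℓ¹-model of the loop algebra. Then the restriction of π^H to K^{≥0}_𝔛 is a bijective continuous ℝ-linear map from K^{≥0}_𝔛 onto ΛH ∩ K_𝔛; in particular it is an isomorphism of real Banach spaces. -/

import Mathlib

open Complex ComplexConjugate Matrix

noncomputable section

attribute [local instance] Matrix.normedAddCommGroup
attribute [local instance] Matrix.normedSpace

/-- Membership in the ℓ¹-model `Λ` of the Wiener loop algebra `Λsl(2,ℂ)`: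
absolutely summable coefficients, all traceless. -/
def memL (ξ : ℤ → Matrix (Fin 2) (Fin 2) ℂ) : Prop :=
  Summable (fun k => ‖ξ k‖) ∧ ∀ k, (ξ k).trace = 0

/-- The coefficientwise involution `(ξ*)_k = −(−1)^k·(ξ_{−k})ᴴ`. -/
def starSeq (ξ : ℤ → Matrix (Fin 2) (Fin 2) ℂ) : ℤ → Matrix (Fin 2) (Fin 2) ℂ :=
  fun k => -((-1 : ℂ) ^ k • (ξ (-k))ᴴ)

/-- The projection `π^H(ξ) = ½(ξ − ξ*)` onto the Hermitian-symmetric part. -/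
def piH (ξ : ℤ → Matrix (Fin 2) (Fin 2) ℂ) : ℤ → Matrix (Fin 2) (Fin 2) ℂ :=
  fun k => (1 / 2 : ℂ) • (ξ k - starSeq ξ k)

/-- The loop `𝔛` with coefficients `𝔛₋₁ = β·E₁₂`, `𝔛₀ = diag(μ,−μ)` (`μ = i√(α²+|β|²)`),
`𝔛₁ = conj(β)·E₂₁`, and `𝔛_k = 0` otherwise. -/
def XX (α : ℝ) (β : ℂ) : ℤ → Matrix (Fin 2) (Fin 2) ℂ := fun k =>
  if k = -1 then β • !![0, 1; 0, 0]
  else if k = 0 then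
    !![Complex.I * ((Real.sqrt (α ^ 2 + Complex.normSq β) : ℝ) : ℂ), 0;
       0, -(Complex.I * ((Real.sqrt (α ^ 2 + Complex.normSq β) : ℝ) : ℂ))]
  else if k = 1 then (conj β) • !![0, 0; 1, 0]
  else 0

/-- The condition `tr(𝔛ξ) = 0`, coefficient by coefficient. -/
def Kcond (α : ℝ) (β : ℂ) (ξ : ℤ → Matrix (Fin 2) (Fin 2) ℂ) : Prop :=
  ∀ k : ℤ, (XX α β (-1) * ξ (k + 1)).trace + (XX α β 0 * ξ k).trace
      + (XX α β 1 * ξ (k - 1)).trace = 0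

def mur (α : ℝ) (β : ℂ) : ℝ := Real.sqrt (α ^ 2 + Complex.normSq β)

lemma mur_pos {α : ℝ} (hα : 0 < α) (β : ℂ) : 0 < mur α β :=
  Real.sqrt_pos.mpr (by nlinarith [Complex.normSq_nonneg β])

lemma trX_neg (α : ℝ) (β : ℂ) (A : Matrix (Fin 2) (Fin 2) ℂ) :
    (XX α β (-1) * A).trace = β * A 1 0 := by
  simp [XX, Matrix.trace_fin_two, Matrix.mul_apply, Matrix.vecMul, dotProduct, Fin.sum_univ_two]

lemma trX_zero (α : ℝ) (β : ℂ) (A : Matrix (Fin 2) (Fin 2) ℂ) :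
    (XX α β 0 * A).trace = Complex.I * (mur α β : ℂ) * (A 0 0 - A 1 1) := by
  simp [XX, mur, Matrix.trace_fin_two, Matrix.mul_apply, Matrix.vecMul, dotProduct, Fin.sum_univ_two]; ring

lemma trX_one (α : ℝ) (β : ℂ) (A : Matrix (Fin 2) (Fin 2) ℂ) :
    (XX α β 1 * A).trace = conj β * A 0 1 := by
  simp [XX, Matrix.trace_fin_two, Matrix.mul_apply, Matrix.vecMul, dotProduct, Fin.sum_univ_two]

lemma kcond_iff (α : ℝ) (β : ℂ) (ξ : ℤ → Matrix (Fin 2) (Fin 2) ℂ) :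
    Kcond α β ξ ↔ ∀ k : ℤ, β * ξ (k + 1) 1 0
      + Complex.I * (mur α β : ℂ) * (ξ k 0 0 - ξ k 1 1) + conj β * ξ (k - 1) 0 1 = 0 := by
  unfold Kcond
  simp_rw [trX_neg, trX_zero, trX_one]

lemma starSeq_apply (ξ : ℤ → Matrix (Fin 2) (Fin 2) ℂ) (k : ℤ) (i j : Fin 2) :
    starSeq ξ k i j = -((-1 : ℂ) ^ k * star (ξ (-k) j i)) := by
  simp [starSeq]

lemma star_negone_zpow (k : ℤ) : star ((-1 : ℂ) ^ k) = (-1 : ℂ) ^ k := by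
  rw [show (star ((-1:ℂ)^k)) = (starRingEnd ℂ) ((-1:ℂ)^k) from rfl, map_zpow₀]
  simp

lemma negone_zpow_mul_neg (k : ℤ) : (-1 : ℂ) ^ k * (-1 : ℂ) ^ (-k) = 1 := by
  rw [← zpow_add₀ (by norm_num : (-1:ℂ) ≠ 0)]
  simp

lemma piH_apply (ξ : ℤ → Matrix (Fin 2) (Fin 2) ℂ) (k : ℤ) (i j : Fin 2) :
    piH ξ k i j = (1 / 2 : ℂ) * (ξ k i j + (-1 : ℂ) ^ k * star (ξ (-k) j i)) := by
  simp [piH, starSeq_apply]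

lemma norm_starSeq (ξ : ℤ → Matrix (Fin 2) (Fin 2) ℂ) (k : ℤ) :
    ‖starSeq ξ k‖ = ‖ξ (-k)‖ := by
  rw [starSeq, norm_neg, norm_smul, norm_zpow, Matrix.norm_conjTranspose]
  simp

lemma norm_piH_le (ξ : ℤ → Matrix (Fin 2) (Fin 2) ℂ) (k : ℤ) :
    ‖piH ξ k‖ ≤ (1/2) * ‖ξ k‖ + (1/2) * ‖ξ (-k)‖ := by
  rw [piH]
  calc ‖(1/2 : ℂ) • (ξ k - starSeq ξ k)‖ = (1/2) * ‖ξ k - starSeq ξ k‖ := by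
        rw [norm_smul]; norm_num
    _ ≤ (1/2) * (‖ξ k‖ + ‖starSeq ξ k‖) := by
        have := norm_sub_le (ξ k) (starSeq ξ k); nlinarith [norm_nonneg (ξ k - starSeq ξ k)]
    _ = (1/2) * ‖ξ k‖ + (1/2) * ‖ξ (-k)‖ := by rw [norm_starSeq]; ring

lemma summable_neg {f : ℤ → ℝ} (hf : Summable f) : Summable (fun k => f (-k)) :=
  (Equiv.neg ℤ).summable_iff.mpr hf

lemma tsum_neg_eq (f : ℤ → ℝ) : (∑' k, f (-k)) = ∑' k, f k := (Equiv.neg ℤ).tsum_eq f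

lemma summable_piH {ξ : ℤ → Matrix (Fin 2) (Fin 2) ℂ} (hξ : Summable (fun k => ‖ξ k‖)) :
    Summable (fun k => ‖piH ξ k‖) := by
  apply Summable.of_nonneg_of_le (fun k => norm_nonneg _) (norm_piH_le ξ)
  exact ((hξ.mul_left _).add ((summable_neg hξ).mul_left _))

lemma starSeq_starSeq (ξ : ℤ → Matrix (Fin 2) (Fin 2) ℂ) (k : ℤ) :
    starSeq (starSeq ξ) k = ξ k := by
  ext i j
  rw [starSeq_apply, starSeq_apply]
  rw [star_neg, star_mul', star_negone_zpow, star_star, neg_neg]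
  linear_combination (ξ k i j) * negone_zpow_mul_neg k

lemma negone_zpow_succ (k : ℤ) : (-1 : ℂ) ^ (k + 1) = -(-1 : ℂ) ^ k := by
  rw [zpow_add₀ (by norm_num : (-1:ℂ) ≠ 0)]; ring

lemma negone_zpow_pred (k : ℤ) : (-1 : ℂ) ^ (k - 1) = -(-1 : ℂ) ^ k := by
  rw [zpow_sub₀ (by norm_num : (-1:ℂ) ≠ 0)]; ring

lemma starSeq_piH (ξ : ℤ → Matrix (Fin 2) (Fin 2) ℂ) (k : ℤ) :
    starSeq (piH ξ) k = -piH ξ k := by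
  ext i j
  simp only [Matrix.neg_apply, starSeq_apply, piH_apply, neg_neg, star_mul', star_add,
    star_star, star_negone_zpow]
  rw [show star ((1:ℂ)/2) = (1/2 : ℂ) by norm_num]
  have h := negone_zpow_mul_neg k
  linear_combination (-(1/2 : ℂ) * ξ k i j) * h

lemma kcond_starSeq {α : ℝ} {β : ℂ} {ξ : ℤ → Matrix (Fin 2) (Fin 2) ℂ}
    (h : Kcond α β ξ) : Kcond α β (starSeq ξ) := by
  rw [kcond_iff] at h ⊢
  intro k
  have hk := congrArg (starRingEnd ℂ) (h (-k))
  simp only [map_add, _root_.map_mul, map_sub, map_zero, Complex.conj_I, Complex.conj_ofReal,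
    Complex.conj_conj] at hk
  rw [starSeq_apply, starSeq_apply, starSeq_apply, starSeq_apply]
  rw [show (-(k+1) : ℤ) = -k - 1 by ring, show (-(k-1) : ℤ) = -k + 1 by ring,
    negone_zpow_succ, negone_zpow_pred]
  simp only [Complex.star_def]
  linear_combination ((-1:ℂ)^k) * hk

lemma piH_entry (ξ : ℤ → Matrix (Fin 2) (Fin 2) ℂ) (m : ℤ) (i j : Fin 2) :
    piH ξ m i j = (1/2 : ℂ) * (ξ m i j - starSeq ξ m i j) := by simp [piH]

lemma kcond_piH {α : ℝ} {β : ℂ} {ξ : ℤ → Matrix (Fin 2) (Fin 2) ℂ}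
    (h : Kcond α β ξ) : Kcond α β (piH ξ) := by
  have h1 := (kcond_iff α β ξ).mp h
  have h2 := (kcond_iff α β _).mp (kcond_starSeq h)
  rw [kcond_iff]; intro k
  rw [piH_entry, piH_entry, piH_entry, piH_entry]
  linear_combination (1/2 : ℂ) * h1 k - (1/2 : ℂ) * h2 k

lemma memL_piH {ξ : ℤ → Matrix (Fin 2) (Fin 2) ℂ} (h : memL ξ) : memL (piH ξ) := by
  refine ⟨summable_piH h.1, fun k => ?_⟩
  have t1 := h.2 k
  have t2 := h.2 (-k)
  simp [piH, Matrix.trace_smul, Matrix.trace_sub, starSeq, Matrix.trace_neg,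
    Matrix.trace_conjTranspose, t1, t2]

lemma piH_of_pos {ξ : ℤ → Matrix (Fin 2) (Fin 2) ℂ} (hs : ∀ k < 0, ξ k = 0)
    {k : ℤ} (hk : 0 < k) : piH ξ k = (1/2 : ℂ) • ξ k := by
  rw [piH, starSeq, hs (-k) (by omega)]; simp

lemma piH_of_neg {ξ : ℤ → Matrix (Fin 2) (Fin 2) ℂ} (hs : ∀ k < 0, ξ k = 0)
    {k : ℤ} (hk : k < 0) : piH ξ k = (1/2 : ℂ) • ((-1 : ℂ) ^ k • (ξ (-k))ᴴ) := by
  rw [piH, starSeq, hs k hk]; simp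

lemma piH_zero' (ξ : ℤ → Matrix (Fin 2) (Fin 2) ℂ) :
    piH ξ 0 = (1/2 : ℂ) • (ξ 0 + (ξ 0)ᴴ) := by
  rw [piH, starSeq]; simp [sub_neg_eq_add]

lemma entry10_zero {α : ℝ} {β : ℂ} (hβ : β ≠ 0) {ξ : ℤ → Matrix (Fin 2) (Fin 2) ℂ}
    (hK : Kcond α β ξ) (hs : ∀ k < 0, ξ k = 0) : ξ 0 1 0 = 0 := by
  have h := (kcond_iff α β ξ).mp hK (-1)
  rw [hs (-1) (by norm_num), hs (-1-1) (by norm_num)] at h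
  norm_num at h
  tauto

lemma inj_aux {α : ℝ} {β : ℂ} (hα : 0 < α) (hβ : β ≠ 0)
    {ξ ζ : ℤ → Matrix (Fin 2) (Fin 2) ℂ}
    (htξ : ∀ k, (ξ k).trace = 0) (hKξ : Kcond α β ξ) (hsξ : ∀ k < 0, ξ k = 0)
    (htζ : ∀ k, (ζ k).trace = 0) (hKζ : Kcond α β ζ) (hsζ : ∀ k < 0, ζ k = 0)
    (hpi : piH ξ = piH ζ) : ξ = ζ := by
  have hμ : (Complex.I * (mur α β : ℂ)) ≠ 0 :=
    mul_ne_zero Complex.I_ne_zero (Complex.ofReal_ne_zero.mpr (mur_pos hα β).ne')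
  have hpos : ∀ k : ℤ, 0 < k → ξ k = ζ k := by
    intro k hk
    have h := congrFun hpi k
    rw [piH_of_pos hsξ hk, piH_of_pos hsζ hk] at h
    exact smul_right_injective (Matrix (Fin 2) (Fin 2) ℂ) (by norm_num : (1/2:ℂ) ≠ 0) h
  funext k
  rcases lt_trichotomy k 0 with hk | hk | hk
  · rw [hsξ k hk, hsζ k hk]
  · subst hk
    have f10 : ξ 0 1 0 = 0 := entry10_zero hβ hKξ hsξ
    have g10 : ζ 0 1 0 = 0 := entry10_zero hβ hKζ hsζ
    have htrξ : ξ 0 0 0 + ξ 0 1 1 = 0 := by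
      have := htξ 0; rwa [Matrix.trace_fin_two] at this
    have htrζ : ζ 0 0 0 + ζ 0 1 1 = 0 := by
      have := htζ 0; rwa [Matrix.trace_fin_two] at this
    have hdiag : ξ 0 0 0 - ξ 0 1 1 = ζ 0 0 0 - ζ 0 1 1 := by
      have h1 := (kcond_iff α β ξ).mp hKξ 0
      have h2 := (kcond_iff α β ζ).mp hKζ 0
      rw [hsξ (0-1) (by norm_num)] at h1
      rw [hsζ (0-1) (by norm_num)] at h2
      norm_num at h1 h2
      have h1' : ξ 1 1 0 = ζ 1 1 0 := by rw [hpos 1 one_pos]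
      apply mul_left_cancel₀ hμ
      linear_combination h1 - h2 - β * h1'
    have h01 : ξ 0 0 1 = ζ 0 0 1 := by
      have h := congrFun hpi 0
      have h' : piH ξ 0 0 1 = piH ζ 0 0 1 := by rw [h]
      rw [piH_apply, piH_apply] at h'
      simp only [neg_zero, zpow_zero, one_mul] at h'
      rw [f10, g10] at h'
      simpa using h'
    have e00 : ξ 0 0 0 = ζ 0 0 0 := by
      apply mul_left_cancel₀ (two_ne_zero (α := ℂ))
      linear_combination htrξ - htrζ + hdiag
    have e11 : ξ 0 1 1 = ζ 0 1 1 := by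
      apply mul_left_cancel₀ (two_ne_zero (α := ℂ))
      linear_combination htrξ - htrζ - hdiag
    have e10 : ξ 0 1 0 = ζ 0 1 0 := by rw [f10, g10]
    ext i j
    fin_cases i <;> fin_cases j
    · exact e00
    · exact h01
    · exact e10
    · exact e11
  · exact hpos k hk

set_option maxHeartbeats 2000000 in
lemma surj_aux {α : ℝ} {β : ℂ} (hα : 0 < α) (hβ : β ≠ 0)
    {H : ℤ → Matrix (Fin 2) (Fin 2) ℂ} (hmH : memL H)
    (hst : ∀ k, starSeq H k = -H k) (hKH : Kcond α β H) :
    ∃ ξ, memL ξ ∧ Kcond α β ξ ∧ (∀ k < 0, ξ k = 0) ∧ piH ξ = H := by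
  have hμr : 0 < mur α β := mur_pos hα β
  set a : ℂ := β * H 1 1 0 with ha
  set s : ℂ := Complex.I * ((a.re / mur α β : ℝ) : ℂ) with hsdef
  set S : Matrix (Fin 2) (Fin 2) ℂ := !![s, H 0 0 1; -(H 0 1 0), -s] with hS
  set ξ : ℤ → Matrix (Fin 2) (Fin 2) ℂ :=
    fun k => if k < 0 then 0 else if k = 0 then H 0 + S else (2:ℂ) • H k with hξdef
  -- consequences of the reality condition
  have hH0 : (H 0)ᴴ = H 0 := by
    have h := hst 0
    rw [starSeq] at h
    simp only [neg_zero, zpow_zero, one_smul] at h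
    exact neg_injective h
  have hHneg : ∀ k < 0, H k = (-1:ℂ)^k • (H (-k))ᴴ := by
    intro k hk
    have h := hst k
    rw [starSeq] at h
    exact (neg_injective h).symm
  have hm1 : H (-1) 0 1 = -star (H 1 1 0) := by
    have h := hHneg (-1) (by norm_num)
    rw [show (-(-1) : ℤ) = 1 by norm_num] at h
    rw [h]
    simp only [Matrix.smul_apply, Matrix.conjTranspose_apply, _root_.zpow_neg, zpow_one,
      Complex.star_def]
    norm_num
  -- entry facts about S
  have hstar_s : star s = -s := by
    rw [hsdef, star_mul', Complex.star_def, Complex.conj_I, Complex.conj_ofReal]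
    ring
  have h01 : star (H 0 1 0) = H 0 0 1 := by
    have h : (H 0)ᴴ 0 1 = H 0 0 1 := by rw [hH0]
    rwa [Matrix.conjTranspose_apply] at h
  have h10 : star (H 0 0 1) = H 0 1 0 := by
    have h : (H 0)ᴴ 1 0 = H 0 1 0 := by rw [hH0]
    rwa [Matrix.conjTranspose_apply] at h
  have hSH : Sᴴ = -S := by
    ext i j
    fin_cases i <;> fin_cases j <;>
      simp [hS, Matrix.conjTranspose_apply, Matrix.neg_apply, hstar_s, h01, h10, star_neg]
  -- description of ξ
  have hξneg : ∀ k < 0, ξ k = 0 := by intro k hk; simp [hξdef, hk]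
  have hξ0 : ξ 0 = H 0 + S := by simp [hξdef]
  have hξpos : ∀ k : ℤ, 0 < k → ξ k = (2:ℂ) • H k := by
    intro k hk
    simp [hξdef, not_lt.mpr hk.le, hk.ne']
  refine ⟨ξ, ⟨?_, ?_⟩, ?_, hξneg, ?_⟩
  · -- summability
    refine Summable.of_nonneg_of_le (f := fun k => 2 * ‖H k‖ + (if k = 0 then ‖S‖ else 0))
      (fun k => norm_nonneg (ξ k)) ?_ ?_
      
    · intro k
      rcases lt_trichotomy k 0 with hk | hk | hk
      · show _ ≤ 2 * ‖H k‖ + (if k = 0 then ‖S‖ else 0)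
        rw [hξneg k hk, if_neg hk.ne, norm_zero]
        positivity
      · subst hk
        show _ ≤ 2 * ‖H 0‖ + (if (0:ℤ) = 0 then ‖S‖ else 0)
        rw [hξ0, if_pos rfl]
        calc ‖H 0 + S‖ ≤ ‖H 0‖ + ‖S‖ := norm_add_le _ _
          _ ≤ 2 * ‖H 0‖ + ‖S‖ := by nlinarith [norm_nonneg (H 0)]
      · show _ ≤ 2 * ‖H k‖ + (if k = 0 then ‖S‖ else 0)
        rw [hξpos k hk, if_neg hk.ne', norm_smul]
        simp
    · apply Summable.add (hmH.1.mul_left 2)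
      apply summable_of_ne_finset_zero (s := {0})
      intro k hk
      simp only [Finset.mem_singleton] at hk
      rw [if_neg hk]
  · -- tracelessness
    intro k
    rcases lt_trichotomy k 0 with hk | hk | hk
    · rw [hξneg k hk]; simp
    · subst hk
      rw [hξ0, Matrix.trace_add, hmH.2 0, Matrix.trace_fin_two]
      simp [hS]
    · rw [hξpos k hk, Matrix.trace_smul, hmH.2 k]; simp
  · -- Kcond
    have hKH' := (kcond_iff α β H).mp hKH
    rw [kcond_iff]
    intro k
    rcases (by omega : k ≤ -2 ∨ k = -1 ∨ k = 0 ∨ k = 1 ∨ 2 ≤ k) with hk | hk | hk | hk | hk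
    · rw [hξneg (k+1) (by omega), hξneg k (by omega), hξneg (k-1) (by omega)]
      simp
    · subst hk
      rw [show (-1 + 1 : ℤ) = 0 by norm_num, hξ0,
        hξneg (-1) (by norm_num), hξneg (-1-1) (by norm_num)]
      simp [hS, Matrix.add_apply]
    · subst hk
      rw [show (0 + 1 : ℤ) = 1 by norm_num, hξpos 1 one_pos, hξ0,
        hξneg (0-1) (by norm_num)]
      have h0 := hKH' 0
      rw [show (0 + 1 : ℤ) = 1 by norm_num, show (0 - 1 : ℤ) = -1 by norm_num, hm1] at h0
      have hadd : a + (starRingEnd ℂ) a = 2 * (a.re : ℂ) := by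
        rw [Complex.add_conj]; push_cast; ring
      have hconj : (starRingEnd ℂ) a = (starRingEnd ℂ) β * (starRingEnd ℂ) (H 1 1 0) := by
        rw [ha]; exact map_mul (starRingEnd ℂ) β (H 1 1 0)
      have hμrC : ((mur α β : ℝ) : ℂ) ≠ 0 := Complex.ofReal_ne_zero.mpr hμr.ne'
      have key : Complex.I * ((mur α β : ℝ):ℂ) * (s - -s) = -(a + (starRingEnd ℂ) a) := by
        rw [hadd, hsdef, Complex.ofReal_div]
        field_simp
        linear_combination (2 * (a.re:ℂ)) * Complex.I_sq
      simp only [Matrix.smul_apply, Matrix.add_apply, hS, Matrix.cons_val', Matrix.cons_val_zero,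
        Matrix.cons_val_one, Matrix.head_cons, Matrix.head_fin_const, Matrix.empty_val',
        Matrix.cons_val_fin_one, Matrix.of_apply, Matrix.zero_apply, mul_zero, smul_eq_mul]
      rw [Complex.star_def] at h0
      linear_combination key + h0 - ha - hconj
    · subst hk
      rw [show (1 + 1 : ℤ) = 2 by norm_num, hξpos 2 (by norm_num), hξpos 1 one_pos,
        show (1 - 1 : ℤ) = 0 by norm_num, hξ0]
      have h1 := hKH' 1
      rw [show (1 + 1 : ℤ) = 2 by norm_num, show (1 - 1 : ℤ) = 0 by norm_num] at h1
      simp only [Matrix.smul_apply, Matrix.add_apply, hS, Matrix.cons_val', Matrix.cons_val_zero,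
        Matrix.cons_val_one, Matrix.head_cons, Matrix.of_apply, smul_eq_mul]
      linear_combination 2 * h1
    · rw [hξpos (k+1) (by omega), hξpos k (by omega), hξpos (k-1) (by omega)]
      have hk' := hKH' k
      simp only [Matrix.smul_apply, smul_eq_mul]
      linear_combination 2 * hk'
  · -- piH ξ = H
    funext k
    rcases lt_trichotomy k 0 with hk | hk | hk
    · rw [piH_of_neg hξneg hk, hξpos (-k) (by omega), hHneg k hk]
      rw [Matrix.conjTranspose_smul, smul_smul, smul_smul]
      congr 1
      rw [show star (2:ℂ) = 2 from by norm_num]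
      ring
    · subst hk
      rw [piH_zero', hξ0, Matrix.conjTranspose_add, hH0, hSH]
      module
    · rw [piH_of_pos hξneg hk, hξpos k hk, smul_smul]
      norm_num

lemma forward_bound {ξ : ℤ → Matrix (Fin 2) (Fin 2) ℂ} (hξ : Summable fun k => ‖ξ k‖) :
    (∑' k, ‖piH ξ k‖) ≤ ∑' k, ‖ξ k‖ := by
  have hs1 : Summable (fun k : ℤ => (1/2) * ‖ξ k‖) := hξ.mul_left _
  have hs2 : Summable (fun k : ℤ => (1/2) * ‖ξ (-k)‖) := (summable_neg hξ).mul_left _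
  calc (∑' k, ‖piH ξ k‖) ≤ ∑' k, ((1/2) * ‖ξ k‖ + (1/2) * ‖ξ (-k)‖) :=
        Summable.tsum_le_tsum (norm_piH_le ξ) (summable_piH hξ) (hs1.add hs2)
    _ = (1/2) * (∑' k, ‖ξ k‖) + (1/2) * (∑' k, ‖ξ (-k)‖) := by
        rw [Summable.tsum_add hs1 hs2, tsum_mul_left, tsum_mul_left]
    _ = ∑' k, ‖ξ k‖ := by rw [tsum_neg_eq (fun k => ‖ξ k‖)]; ring

set_option maxHeartbeats 2000000 in
lemma inverse_bound {α : ℝ} {β : ℂ} (hα : 0 < α) (hβ : β ≠ 0)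
    {ξ : ℤ → Matrix (Fin 2) (Fin 2) ℂ} (hm : memL ξ) (hK : Kcond α β ξ)
    (hs : ∀ k < 0, ξ k = 0) :
    (∑' k, ‖ξ k‖) ≤ (2 + 2 * ‖β‖ / mur α β) * ∑' k, ‖piH ξ k‖ := by
  have hμr : 0 < mur α β := mur_pos hα β
  have hpiS : Summable (fun k => ‖piH ξ k‖) := summable_piH hm.1
  have hnormpos : ∀ k : ℤ, 0 < k → ‖ξ k‖ = 2 * ‖piH ξ k‖ := by
    intro k hk
    rw [piH_of_pos hs hk, norm_smul]
    rw [show ‖(1/2 : ℂ)‖ = 1/2 by norm_num]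
    ring
  -- the zero coefficient
  have h10 : ξ 0 1 0 = 0 := entry10_zero hβ hK hs
  have htr : ξ 0 0 0 + ξ 0 1 1 = 0 := by
    have := hm.2 0; rwa [Matrix.trace_fin_two] at this
  have hkc0 := (kcond_iff α β ξ).mp hK 0
  rw [hs (0-1) (by norm_num)] at hkc0
  norm_num at hkc0
  -- ξ 0 0 0 in terms of ξ 1 1 0
  have hμC : (2 * (Complex.I * ((mur α β : ℝ) : ℂ))) ≠ 0 := by
    apply mul_ne_zero two_ne_zero
    exact mul_ne_zero Complex.I_ne_zero (Complex.ofReal_ne_zero.mpr hμr.ne')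
  have e8 : ξ 0 0 0 = -(β * ξ 1 1 0) / (2 * (Complex.I * ((mur α β : ℝ) : ℂ))) := by
    rw [eq_div_iff hμC]
    linear_combination hkc0 + Complex.I * ((mur α β : ℝ):ℂ) * htr
  have hb00 : ‖ξ 0 0 0‖ ≤ (‖β‖ / mur α β) * ‖piH ξ 1‖ := by
    have h1 : ‖ξ 0 0 0‖ = ‖β‖ * ‖ξ 1 1 0‖ / (2 * mur α β) := by
      rw [e8, norm_div, norm_neg, norm_mul, norm_mul, norm_mul, Complex.norm_I, one_mul,
        Complex.norm_real, Real.norm_eq_abs, abs_of_pos hμr]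
      norm_num
    have h2 : ‖ξ 1 1 0‖ ≤ 2 * ‖piH ξ 1‖ := by
      rw [← hnormpos 1 one_pos]
      exact Matrix.norm_entry_le_entrywise_sup_norm (ξ 1)
    rw [h1, div_le_iff₀ (by positivity)]
    have hb : 0 ≤ ‖β‖ := norm_nonneg β
    calc ‖β‖ * ‖ξ 1 1 0‖ ≤ ‖β‖ * (2 * ‖piH ξ 1‖) := mul_le_mul_of_nonneg_left h2 hb
      _ = ‖β‖ / mur α β * ‖piH ξ 1‖ * (2 * mur α β) := by field_simp
  have hb01 : ‖ξ 0 0 1‖ ≤ 2 * ‖piH ξ 0‖ := by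
    have hp : piH ξ 0 0 1 = (1/2 : ℂ) * ξ 0 0 1 := by
      rw [piH_apply]
      simp only [neg_zero, zpow_zero, one_mul, h10, star_zero, add_zero]
    have : ξ 0 0 1 = 2 * piH ξ 0 0 1 := by rw [hp]; ring
    rw [this, norm_mul]
    have := Matrix.norm_entry_le_entrywise_sup_norm (piH ξ 0) (i := 0) (j := 1)
    simp only [Complex.norm_ofNat]
    nlinarith [norm_nonneg (piH ξ 0)]
  have hb11 : ‖ξ 0 1 1‖ ≤ (‖β‖ / mur α β) * ‖piH ξ 1‖ := by
    have : ξ 0 1 1 = -ξ 0 0 0 := by linear_combination htr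
    rw [this, norm_neg]; exact hb00
  have hbound0 : ‖ξ 0‖ ≤ 2 * ‖piH ξ 0‖ + (2 * ‖β‖ / mur α β) * ‖piH ξ 1‖ := by
    have hr : (0:ℝ) ≤ 2 * ‖piH ξ 0‖ + (2 * ‖β‖ / mur α β) * ‖piH ξ 1‖ := by positivity
    rw [Matrix.norm_le_iff hr]
    have hq : (0:ℝ) ≤ ‖β‖ / mur α β * ‖piH ξ 1‖ := by positivity
    have hp0 : (0:ℝ) ≤ ‖piH ξ 0‖ := norm_nonneg _
    have hrw : 2 * ‖β‖ / mur α β * ‖piH ξ 1‖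
        = 2 * (‖β‖ / mur α β * ‖piH ξ 1‖) := by ring
    intro i j
    fin_cases i <;> fin_cases j
    · refine le_trans hb00 ?_
      rw [hrw]; linarith
    · refine le_trans hb01 ?_
      linarith
    · show ‖ξ 0 1 0‖ ≤ 2 * ‖piH ξ 0‖ + 2 * ‖β‖ / mur α β * ‖piH ξ 1‖
      rw [h10, norm_zero]; exact hr
    · refine le_trans hb11 ?_
      rw [hrw]; linarith
  -- global bound
  have hglob : ∀ k : ℤ, ‖ξ k‖ ≤ 2 * ‖piH ξ k‖
      + (if k = 0 then (2 * ‖β‖ / mur α β) * ‖piH ξ 1‖ else 0) := by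
    intro k
    rcases lt_trichotomy k 0 with hk | hk | hk
    · rw [hs k hk, if_neg hk.ne, norm_zero, add_zero]
      positivity
    · subst hk
      rw [if_pos rfl]
      exact hbound0
    · rw [if_neg hk.ne', add_zero, hnormpos k hk]
  have hsum2 : Summable (fun k : ℤ => 2 * ‖piH ξ k‖) := hpiS.mul_left 2
  have hsumI : Summable (fun k : ℤ =>
      (if k = 0 then (2 * ‖β‖ / mur α β) * ‖piH ξ 1‖ else 0)) := by
    apply summable_of_ne_finset_zero (s := {0})
    intro k hk
    simp only [Finset.mem_singleton] at hk
    rw [if_neg hk]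
  calc (∑' k, ‖ξ k‖) ≤ ∑' k, (2 * ‖piH ξ k‖
        + (if k = 0 then (2 * ‖β‖ / mur α β) * ‖piH ξ 1‖ else 0)) :=
        Summable.tsum_le_tsum hglob hm.1 (hsum2.add hsumI)
    _ = 2 * (∑' k, ‖piH ξ k‖) + (2 * ‖β‖ / mur α β) * ‖piH ξ 1‖ := by
        rw [Summable.tsum_add hsum2 hsumI, tsum_mul_left, tsum_ite_eq]
    _ ≤ 2 * (∑' k, ‖piH ξ k‖) + (2 * ‖β‖ / mur α β) * (∑' k, ‖piH ξ k‖) := by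
        have hle : ‖piH ξ 1‖ ≤ ∑' k, ‖piH ξ k‖ :=
          Summable.le_tsum hpiS 1 (fun _ _ => norm_nonneg _)
        have : (0:ℝ) ≤ 2 * ‖β‖ / mur α β := by positivity
        nlinarith
    _ = (2 + 2 * ‖β‖ / mur α β) * ∑' k, ‖piH ξ k‖ := by ring

lemma piH_add' (ξ ζ : ℤ → Matrix (Fin 2) (Fin 2) ℂ) : piH (ξ + ζ) = piH ξ + piH ζ := by
  funext k; ext i j
  simp only [Pi.add_apply, piH_apply, Matrix.add_apply, star_add]
  ring

lemma piH_smul' (r : ℝ) (ξ : ℤ → Matrix (Fin 2) (Fin 2) ℂ) :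
    piH (fun k => (r : ℂ) • ξ k) = fun k => (r : ℂ) • piH ξ k := by
  funext k; ext i j
  simp only [piH_apply, Matrix.smul_apply, smul_eq_mul, star_mul', Complex.star_def,
    Complex.conj_ofReal]
  ring


/-- For `α > 0` and `β ≠ 0`, the restriction of `π^H` to `K^{≥0}_𝔛` is a bijective
continuous ℝ-linear map onto `ΛH ∩ K_𝔛`, and an isomorphism of real Banach spaces
(both it and its inverse are bounded). -/
theorem stmt12 (α : ℝ) (hα : 0 < α) (β : ℂ) (hβ : β ≠ 0) :
    -- π^H maps K^{≥0}_𝔛 into ΛH ∩ K_𝔛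
    (∀ ξ, memL ξ → Kcond α β ξ → (∀ k < 0, ξ k = 0) →
      memL (piH ξ) ∧ (∀ k, starSeq (piH ξ) k = -piH ξ k) ∧ Kcond α β (piH ξ)) ∧
    -- injectivity
    (∀ ξ ζ, memL ξ → Kcond α β ξ → (∀ k < 0, ξ k = 0) →
      memL ζ → Kcond α β ζ → (∀ k < 0, ζ k = 0) → piH ξ = piH ζ → ξ = ζ) ∧
    -- surjectivity onto ΛH ∩ K_𝔛
    (∀ H, memL H → (∀ k, starSeq H k = -H k) → Kcond α β H →
      ∃ ξ, memL ξ ∧ Kcond α β ξ ∧ (∀ k < 0, ξ k = 0) ∧ piH ξ = H) ∧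
    -- ℝ-linearity
    (∀ ξ ζ : ℤ → Matrix (Fin 2) (Fin 2) ℂ, piH (ξ + ζ) = piH ξ + piH ζ) ∧
    (∀ (r : ℝ) (ξ : ℤ → Matrix (Fin 2) (Fin 2) ℂ),
      piH (fun k => (r : ℂ) • ξ k) = fun k => (r : ℂ) • piH ξ k) ∧
    -- continuity (boundedness) of the map and of its inverse
    (∃ C : ℝ, 0 < C ∧ ∀ ξ, memL ξ → Kcond α β ξ → (∀ k < 0, ξ k = 0) →
      (∑' k, ‖piH ξ k‖) ≤ C * ∑' k, ‖ξ k‖) ∧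
    (∃ C : ℝ, 0 < C ∧ ∀ ξ, memL ξ → Kcond α β ξ → (∀ k < 0, ξ k = 0) →
      (∑' k, ‖ξ k‖) ≤ C * ∑' k, ‖piH ξ k‖) := by
  refine ⟨?_, ?_, ?_, piH_add', piH_smul', ?_, ?_⟩
  · intro ξ hm hK _
    exact ⟨memL_piH hm, starSeq_piH ξ, kcond_piH hK⟩
  · intro ξ ζ hmξ hKξ hsξ hmζ hKζ hsζ hpi
    exact inj_aux hα hβ hmξ.2 hKξ hsξ hmζ.2 hKζ hsζ hpi
  · intro H hmH hst hKH
    exact surj_aux hα hβ hmH hst hKH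
  · exact ⟨1, one_pos, fun ξ hm _ _ => by rw [one_mul]; exact forward_bound hm.1⟩
  · refine ⟨2 + 2 * ‖β‖ / mur α β, ?_, fun ξ hm hK hs => inverse_bound hα hβ hm hK hs⟩
    have : (0:ℝ) ≤ 2 * ‖β‖ / mur α β :=
      div_nonneg (by positivity) (mur_pos hα β).le
    linarith
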